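/- Let N ≥ 2 be an integer, A a commutative ring, and q ∈ A invertible. Then in M_N(A) ⊗ M_N(A) with entries in the Laurent polynomial ring A[x, x⁻¹] one has the unitarity-type identity R̄₁₂(x) · R̄₂₁(x⁻¹) = (1 − q⁻²x)(1 − q⁻²x⁻¹) · Id, where R̄₂₁(x) = P R̄(x) P with P = Σ_{i,j} e_{ij}⊗e_{ji} the permutation operator. -/

import Mathlib

/-- The trigonometric `R`-matrix of type `A`; the parameter `t` stands for `q⁻¹`,
on which alone the matrix depends. -/
def Rbar (N : ℕ) {R : Type*} [CommRing R] (t x : R) :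
    Matrix (Fin N × Fin N) (Fin N × Fin N) R := fun p r =>
  (if p.1 = r.1 ∧ p.2 = r.2 then
      (if p.1 = p.2 then 1 - t ^ 2 * x else t * (1 - x)) else 0)
  + (if p.1 ≠ p.2 ∧ p.1 = r.2 ∧ p.2 = r.1 then
      (if p.2 < p.1 then (1 - t ^ 2) * x else 1 - t ^ 2) else 0)

/-- The permutation operator `P = Σ_{i,j} e_{ij} ⊗ e_{ji}` on `M_N ⊗ M_N`. -/
def Pmat (N : ℕ) (R : Type*) [CommRing R] :
    Matrix (Fin N × Fin N) (Fin N × Fin N) R := fun p r =>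
  if p.1 = r.2 ∧ p.2 = r.1 then 1 else 0

lemma sum_pair {α β M : Type*} [Fintype α] [DecidableEq α] [Fintype β] [DecidableEq β]
    [AddCommMonoid M] (a : α) (b : β) (f : α × β → M) :
    ∑ m : α × β, (if a = m.1 ∧ b = m.2 then f m else 0) = f (a, b) := by
  rw [Fintype.sum_prod_type, Finset.sum_eq_single a]
  · rw [Finset.sum_eq_single b]
    · simp
    · intro d _ hd; simp [Ne.symm hd]
    · simp
  · intro c _ hc; apply Finset.sum_eq_zero; intro d _; simp [Ne.symm hc]
  · simp

lemma sum_pair' {α β M : Type*} [Fintype α] [DecidableEq α] [Fintype β] [DecidableEq β]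
    [AddCommMonoid M] (a : α) (b : β) (f : α × β → M) :
    ∑ m : α × β, (if m.1 = a ∧ m.2 = b then f m else 0) = f (a, b) := by
  rw [← sum_pair a b f]
  congr 1; ext m; congr 1
  simp [eq_comm]

lemma Pmat_mul {N : ℕ} {R : Type*} [CommRing R]
    (M : Matrix (Fin N × Fin N) (Fin N × Fin N) R) (p r : Fin N × Fin N) :
    (Pmat N R * M) p r = M (p.2, p.1) r := by
  rw [Matrix.mul_apply]
  simp only [Pmat, ite_mul, one_mul, zero_mul]
  rw [← Equiv.sum_comp (Equiv.prodComm (Fin N) (Fin N))]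
  exact sum_pair p.1 p.2 (fun m => M (m.2, m.1) r)

lemma mul_Pmat {N : ℕ} {R : Type*} [CommRing R]
    (M : Matrix (Fin N × Fin N) (Fin N × Fin N) R) (p r : Fin N × Fin N) :
    (M * Pmat N R) p r = M p (r.2, r.1) := by
  rw [Matrix.mul_apply]
  simp only [Pmat, mul_ite, mul_one, mul_zero]
  rw [← Equiv.sum_comp (Equiv.prodComm (Fin N) (Fin N))]
  simpa [and_comm, Prod.swap] using sum_pair' r.1 r.2 (fun m => M p (m.2, m.1))

lemma Rbar_mul_sum {N : ℕ} {R : Type*} [CommRing R] (t x : R) (p : Fin N × Fin N)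
    (g : Fin N × Fin N → R) :
    ∑ m : Fin N × Fin N, Rbar N t x p m * g m =
      (if p.1 = p.2 then 1 - t ^ 2 * x else t * (1 - x)) * g p +
      (if p.1 = p.2 then 0 else
        (if p.2 < p.1 then (1 - t ^ 2) * x else 1 - t ^ 2) * g (p.2, p.1)) := by
  simp only [Rbar, add_mul, ite_mul, zero_mul]
  rw [Finset.sum_add_distrib]
  congr 1
  · simpa using sum_pair p.1 p.2
      (fun m => (if p.1 = p.2 then 1 - t ^ 2 * x else t * (1 - x)) * g m)
  · by_cases hp : p.1 = p.2
    · simp [hp]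
    · simp only [hp, ne_eq, not_false_iff, true_and, if_neg hp]
      simp only [show ∀ (a b : Fin N), (p.1 = b ∧ p.2 = a) ↔ (p.2 = a ∧ p.1 = b)
        from fun a b => and_comm]
      simpa using sum_pair p.2 p.1
        (fun m => if p.2 < p.1 then (1 - t ^ 2) * x * g m else (1 - t ^ 2) * g m)

/-- The unitarity-type identity
`R̄₁₂(x) R̄₂₁(x⁻¹) = (1 − q⁻²x)(1 − q⁻²x⁻¹) · Id` in
`M_N(A[x,x⁻¹]) ⊗ M_N(A[x,x⁻¹])`, where `R̄₂₁(x) = P R̄(x) P`. -/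
theorem Rbar_unitarity (N : ℕ) (hN : 2 ≤ N)
    (A : Type*) [CommRing A] (q : Aˣ) :
    let L := LaurentPolynomial A
    let x : L := LaurentPolynomial.T 1
    let xinv : L := LaurentPolynomial.T (-1)
    let t : L := LaurentPolynomial.C ((q⁻¹ : Aˣ) : A)
    Rbar N t x * (Pmat N L * Rbar N t xinv * Pmat N L) =
      ((1 - t ^ 2 * x) * (1 - t ^ 2 * xinv)) •
        (1 : Matrix (Fin N × Fin N) (Fin N × Fin N) L) := by
  intro L x xinv t
  have hx : x * xinv = 1 := by
    show LaurentPolynomial.T 1 * LaurentPolynomial.T (-1) = 1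
    rw [← LaurentPolynomial.T_add]
    norm_num
  apply Matrix.ext
  rintro ⟨i, j⟩ ⟨k, l⟩
  rw [Matrix.mul_apply]
  have key : ∀ m : Fin N × Fin N,
      (Pmat N L * Rbar N t xinv * Pmat N L) m (k, l) =
        Rbar N t xinv (m.2, m.1) (l, k) := by
    intro m; rw [mul_Pmat, Pmat_mul]
  simp only [key]
  rw [Rbar_mul_sum]
  simp only [Rbar, Matrix.smul_apply, Matrix.one_apply, smul_eq_mul, Prod.mk.injEq]
  by_cases hij : i = j <;> by_cases hik : i = k <;> by_cases hjl : j = l <;>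
      by_cases hjk : j = k <;> by_cases hil : i = l <;>
    simp_all <;>
    split_ifs <;>
    first
      | ring1
      | linear_combination (1 - t ^ 2) * hx
      | linear_combination (t ^ 2 - t ^ 4) * hx
      | linear_combination (t ^ 3 - t) * hx
      | linear_combination (t - t ^ 3) * hx
      | (exfalso; omega)
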